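/- Let H be an undirected graph on n ≥ 2 vertices such that every subgraph H' of H with at least 2 vertices admits a vertex set S ⊆ V(H') with |S| ≤ c·|V(H')|^{1−1/d} whose removal leaves connected components of size at most ((d+1)/(d+2))·|V(H')|, and suppose every vertex of H has degree at most Δ. Then every subgraph H' of H with |V(H')| ≥ 2 admits a balanced cut (an edge set whose removal leaves all components of size ≤ |V(H')|/2) of size at most c'·|V(H')|^{1−1/d}, where c' depends only on c, d, and Δ. -/

import Mathlib

open SimpleGraph

/-- Closure/relabeling along walks. -/
lemma walk_closure {V : Type} {G G' : SimpleGraph V} {T : Set V}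
    (h : ∀ a b, a ∈ T → G.Adj a b → b ∈ T ∧ G'.Adj a b) :
    ∀ x y, x ∈ T → G.Reachable x y → y ∈ T ∧ G'.Reachable x y := by
  intro x y hx hr
  obtain ⟨w⟩ := hr
  revert hx
  induction w with
  | nil => exact fun hx => ⟨hx, Reachable.refl _⟩
  | cons h' p ih =>
    intro hx
    obtain ⟨hb, hadj⟩ := h _ _ hx h'
    obtain ⟨hy, hr⟩ := ih hb
    exact ⟨hy, hadj.reachable.trans hr⟩

lemma fromRel_reach_mono {V : Type} {r r' : V → V → Prop} (h : ∀ a b, r a b → r' a b)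
    {x y : V} (hr : (SimpleGraph.fromRel r).Reachable x y) :
    (SimpleGraph.fromRel r').Reachable x y := by
  refine hr.mono ?_
  intro a b hab
  rw [SimpleGraph.fromRel_adj] at hab ⊢
  exact ⟨hab.1, hab.2.imp (h _ _) (h _ _)⟩

/-- Counting: a finite union of small sets is small. -/
lemma ncard_biUnion_le' {α β : Type} [Finite β] {S : Set α} (hS : S.Finite)
    (f : α → Set β) (Δ : ℕ)
    (hf : ∀ v, (f v).ncard ≤ Δ) : (⋃ v ∈ S, f v).ncard ≤ S.ncard * Δ := by
  classical
  refine Set.Finite.induction_on (motive := fun s _ => (⋃ v ∈ s, f v).ncard ≤ s.ncard * Δ)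
    S hS (by simp) ?_
  intro a s ha hs ih
  have : (⋃ v ∈ insert a s, f v) = f a ∪ ⋃ v ∈ s, f v := by
    simp [Set.biUnion_insert]
  rw [this, Set.ncard_insert_of_notMem ha hs]
  calc (f a ∪ ⋃ v ∈ s, f v).ncard ≤ (f a).ncard + (⋃ v ∈ s, f v).ncard :=
        Set.ncard_union_le _ _
    _ ≤ Δ + s.ncard * Δ := add_le_add (hf a) ih
    _ = (s.ncard + 1) * Δ := by ring

lemma ncard_subset_biUnion_le {α β : Type} [Finite β] (S : Set α) (f : α → Set β)
    (N : Set β) (Δ : ℕ) (hS : S.Finite) (hsub : N ⊆ ⋃ v ∈ S, f v)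
    (hf : ∀ v, (f v).ncard ≤ Δ) : N.ncard ≤ S.ncard * Δ :=
  (Set.ncard_le_ncard hsub (Set.toFinite _)).trans (ncard_biUnion_le' hS f Δ hf)

/-- The connected component of `x` after cutting the edges in `F` from `H'`. -/
abbrev cutComp {V : Type} {H : SimpleGraph V} (H' : H.Subgraph) (F : Set (Sym2 V))
    (x : V) : Set V :=
  {y : V | (SimpleGraph.fromRel (fun a b => H'.Adj a b ∧ s(a, b) ∉ F)).Reachable x y}

lemma cutComp_adj {V : Type} {H : SimpleGraph V} {H' : H.Subgraph} {F : Set (Sym2 V)}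
    {a b : V}
    (h : (SimpleGraph.fromRel (fun a b => H'.Adj a b ∧ s(a, b) ∉ F)).Adj a b) :
    a ≠ b ∧ H'.Adj a b ∧ s(a, b) ∉ F := by
  rw [SimpleGraph.fromRel_adj] at h
  obtain ⟨hne, h | h⟩ := h
  · exact ⟨hne, h.1, h.2⟩
  · exact ⟨hne, h.1.symm, by rw [Sym2.eq_swap]; exact h.2⟩

lemma cutComp_subset_verts {V : Type} {H : SimpleGraph V} {H' : H.Subgraph}
    {F : Set (Sym2 V)} {x : V} (hx : x ∈ H'.verts) : cutComp H' F x ⊆ H'.verts := by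
  intro y hy
  refine (walk_closure (G' := SimpleGraph.fromRel (fun a b => H'.Adj a b ∧ s(a, b) ∉ F))
    (T := H'.verts) ?_ x y hx hy).1
  intro a b _ hadj
  exact ⟨H'.edge_vert (cutComp_adj hadj).2.1.symm, hadj⟩

lemma cutComp_mono {V : Type} {H : SimpleGraph V} {H' : H.Subgraph}
    {F F' : Set (Sym2 V)} {x : V} (hFF' : F ⊆ F') :
    cutComp H' F' x ⊆ cutComp H' F x := fun _ hy =>
  fromRel_reach_mono (fun _ _ hab => ⟨hab.1, fun hm => hab.2 (hFF' hm)⟩) hy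

/-- If every subgraph of a bounded-degree graph `H` admits a small vertex separator
(Miller–Teng–Thurston–Vavasis property with exponent `1 - 1/d` and balance ratio
`(d+1)/(d+2)`), then every subgraph of `H` with at least 2 vertices admits a balanced
edge cut of size `c' * |V(H')|^(1-1/d)`, where `c'` depends only on `c`, `d`, `Δ`. -/
theorem stmt_12 (c : ℝ) (d Δ : ℕ) (hd : 1 ≤ d) :
    ∃ c' : ℝ, ∀ (V : Type) [Fintype V] (H : SimpleGraph V),
      (∀ x : V, {y : V | H.Adj x y}.ncard ≤ Δ) →
      (∀ H' : H.Subgraph, 2 ≤ H'.verts.ncard →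
        ∃ S : Set V, S ⊆ H'.verts ∧
          (S.ncard : ℝ) ≤ c * (H'.verts.ncard : ℝ) ^ (1 - 1 / (d : ℝ)) ∧
          ∀ x ∈ H'.verts \ S,
            (({y : V | (SimpleGraph.fromRel
                (fun a b => H'.Adj a b ∧ a ∉ S ∧ b ∉ S)).Reachable x y}.ncard : ℝ)
              ≤ ((d : ℝ) + 1) / ((d : ℝ) + 2) * (H'.verts.ncard : ℝ))) →
      ∀ H' : H.Subgraph, 2 ≤ H'.verts.ncard →
        ∃ F : Set (Sym2 V), F ⊆ H'.edgeSet ∧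
          (F.ncard : ℝ) ≤ c' * (H'.verts.ncard : ℝ) ^ (1 - 1 / (d : ℝ)) ∧
          ∀ x ∈ H'.verts,
            (({y : V | (SimpleGraph.fromRel
                (fun a b => H'.Adj a b ∧ s(a, b) ∉ F)).Reachable x y}.ncard : ℝ)
              ≤ (H'.verts.ncard : ℝ) / 2) := by
  classical
  have hd1 : (1:ℝ) ≤ (d:ℝ) := by exact_mod_cast hd
  obtain ⟨K, hK⟩ := exists_pow_lt_of_lt_one (show (0:ℝ) < 1/2 by norm_num)
    (show ((d:ℝ)+1)/((d:ℝ)+2) < 1 by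
      rw [div_lt_one (by linarith)]; linarith)
  refine ⟨(K:ℝ) * (Δ:ℝ) * c, ?_⟩
  intro V _ H hdeg hsep H' hn
  set ρ : ℝ := ((d:ℝ)+1)/((d:ℝ)+2) with hρdef
  set e : ℝ := 1 - 1/(d:ℝ) with he_def
  have hρ0 : 0 ≤ ρ := by rw [hρdef]; positivity
  have he : 0 ≤ e := by
    rw [he_def, sub_nonneg, div_le_one (by linarith)]; linarith
  have hn2 : (2:ℝ) ≤ (H'.verts.ncard : ℝ) := by exact_mod_cast hn
  have hpe : (1:ℝ) ≤ (H'.verts.ncard:ℝ) ^ e := Real.one_le_rpow (by linarith) he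
  have hc : 0 ≤ c := by
    obtain ⟨S, -, hS, -⟩ := hsep H' hn
    by_contra hcneg
    push_neg at hcneg
    have h1 : c * (H'.verts.ncard:ℝ)^e < 0 := mul_neg_of_neg_of_pos hcneg (by linarith)
    have h2 : (0:ℝ) ≤ (S.ncard : ℝ) := Nat.cast_nonneg _
    linarith
  have hstep : (0:ℝ) ≤ (Δ:ℝ) * c * (H'.verts.ncard:ℝ)^e := by positivity
  have main : ∀ k : ℕ, ∃ F : Set (Sym2 V), F ⊆ H'.edgeSet ∧
      (F.ncard : ℝ) ≤ (k:ℝ) * ((Δ:ℝ) * c * (H'.verts.ncard:ℝ) ^ e) ∧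
      ∀ x ∈ H'.verts, ((cutComp H' F x).ncard : ℝ)
        ≤ max (ρ^k * (H'.verts.ncard:ℝ)) ((H'.verts.ncard:ℝ)/2) := by
    intro k
    induction k with
    | zero =>
      refine ⟨∅, by simp, by simp, ?_⟩
      intro x hx
      have h1 : (cutComp H' ∅ x).ncard ≤ H'.verts.ncard :=
        Set.ncard_le_ncard (cutComp_subset_verts hx) (Set.toFinite _)
      have h2 : ((cutComp H' ∅ x).ncard : ℝ) ≤ (H'.verts.ncard:ℝ) := by exact_mod_cast h1
      refine le_max_of_le_left ?_
      simpa using h2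
    | succ k ih =>
      obtain ⟨F, hFsub, hFcard, hFcomp⟩ := ih
      by_cases hbig : ∃ x₀ ∈ H'.verts, (H'.verts.ncard:ℝ)/2 < ((cutComp H' F x₀).ncard : ℝ)
      case neg =>
        push_neg at hbig
        refine ⟨F, hFsub, ?_, fun x hx => le_max_of_le_right (hbig x hx)⟩
        refine hFcard.trans ?_
        push_cast
        nlinarith [hstep]
      case pos =>
        obtain ⟨x₀, hx₀, hCbig⟩ := hbig
        set C : Set V := cutComp H' F x₀ with hCdef
        have hCsub : C ⊆ H'.verts := cutComp_subset_verts hx₀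
        have hCcard_le : (C.ncard : ℝ) ≤ (H'.verts.ncard:ℝ) := by
          exact_mod_cast Set.ncard_le_ncard hCsub (Set.toFinite _)
        have hCk : (C.ncard:ℝ) ≤ ρ^k * (H'.verts.ncard:ℝ) := by
          rcases le_max_iff.mp (hFcomp x₀ hx₀) with h | h
          · exact h
          · linarith
        have hC2 : 2 ≤ C.ncard := by
          have h1 : (1:ℝ) < (C.ncard:ℝ) := by linarith
          have h2 : 1 < C.ncard := by exact_mod_cast h1
          omega
        let H'' : H.Subgraph :=
          { verts := C
            Adj := fun a b => H'.Adj a b ∧ s(a,b) ∉ F ∧ a ∈ C ∧ b ∈ C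
            adj_sub := fun h => H'.adj_sub h.1
            edge_vert := fun h => h.2.2.1
            symm := ⟨fun a b h =>
              ⟨h.1.symm, by rw [Sym2.eq_swap]; exact h.2.1, h.2.2.2, h.2.2.1⟩⟩ }
        obtain ⟨S, hSsub, hScard, hScomp⟩ := hsep H'' hC2
        set N : Set (Sym2 V) := {e | e ∈ H'.edgeSet ∧ ∃ v ∈ S, v ∈ e} with hNdef
        refine ⟨F ∪ N, Set.union_subset hFsub (fun e he => he.1), ?_, ?_⟩
        · -- cardinality bound
          have hNsub : N ⊆ ⋃ v ∈ S, H.incidenceSet v := by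
            rintro e ⟨heE, v, hvS, hve⟩
            exact Set.mem_biUnion hvS ⟨H'.edgeSet_subset heE, hve⟩
          have hinc : ∀ v, (H.incidenceSet v).ncard ≤ Δ := by
            intro v
            have heq : (H.incidenceSet v).ncard = (H.neighborSet v).ncard := by
              rw [← Nat.card_coe_set_eq, ← Nat.card_coe_set_eq]
              exact Nat.card_congr (H.incidenceSetEquivNeighborSet v)
            rw [heq]; exact hdeg v
          have hN : (N.ncard : ℝ) ≤ (S.ncard : ℝ) * (Δ:ℝ) := by
            exact_mod_cast ncard_subset_biUnion_le S _ N Δ (Set.toFinite S) hNsub hinc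
          have hCe : (C.ncard:ℝ)^e ≤ (H'.verts.ncard:ℝ)^e :=
            Real.rpow_le_rpow (Nat.cast_nonneg _) hCcard_le he
          have hΔ0 : (0:ℝ) ≤ (Δ:ℝ) := Nat.cast_nonneg _
          have h3 : (N.ncard:ℝ) ≤ (Δ:ℝ) * c * (H'.verts.ncard:ℝ)^e := by
            calc (N.ncard:ℝ) ≤ (S.ncard:ℝ) * (Δ:ℝ) := hN
              _ ≤ (c * (C.ncard:ℝ)^e) * (Δ:ℝ) :=
                  mul_le_mul_of_nonneg_right hScard hΔ0
              _ ≤ (c * (H'.verts.ncard:ℝ)^e) * (Δ:ℝ) := by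
                  have h4 := mul_le_mul_of_nonneg_left hCe hc
                  nlinarith
              _ = (Δ:ℝ) * c * (H'.verts.ncard:ℝ)^e := by ring
          have hu : ((F ∪ N).ncard : ℝ) ≤ (F.ncard:ℝ) + (N.ncard:ℝ) := by
            exact_mod_cast Set.ncard_union_le F N
          have hre : ((k:ℝ)+1) * ((Δ:ℝ) * c * (H'.verts.ncard:ℝ)^e)
              = (k:ℝ) * ((Δ:ℝ) * c * (H'.verts.ncard:ℝ)^e)
                + (Δ:ℝ) * c * (H'.verts.ncard:ℝ)^e := by ring
          push_cast
          linarith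
        · -- component bound
          intro x hx
          by_cases hxS : x ∈ S
          · -- x ∈ S: isolated
            have hsub1 : cutComp H' (F ∪ N) x ⊆ {x} := by
              intro y hy
              refine (walk_closure
                (G' := SimpleGraph.fromRel (fun a b => H'.Adj a b ∧ s(a,b) ∉ (F ∪ N)))
                (T := {x}) ?_ x y rfl hy).1
              intro a b ha hadj
              obtain ⟨hne, hadj', hnF⟩ := cutComp_adj hadj
              exfalso
              apply hnF
              refine Set.mem_union_right _ ⟨Subgraph.mem_edgeSet.mpr hadj', a, ?_,
                Sym2.mem_mk_left a b⟩
              have ha' : a = x := ha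
              rw [ha']; exact hxS
            have h1 : (cutComp H' (F ∪ N) x).ncard ≤ 1 := by
              have h2 := Set.ncard_le_ncard hsub1 (Set.toFinite _)
              simpa using h2
            have h3 : ((cutComp H' (F ∪ N) x).ncard : ℝ) ≤ 1 := by exact_mod_cast h1
            exact le_max_of_le_right (by linarith)
          · by_cases hxC : x ∈ C
            · -- x ∈ C \ S : use the separator bound
              have hclo : ∀ a b, a ∈ C \ S →
                  (SimpleGraph.fromRel (fun a b => H'.Adj a b ∧ s(a,b) ∉ (F ∪ N))).Adj a b →
                  b ∈ C \ S ∧ (SimpleGraph.fromRel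
                    (fun a b => H''.Adj a b ∧ a ∉ S ∧ b ∉ S)).Adj a b := by
                rintro a b ⟨haC, haS⟩ hadj
                obtain ⟨hne, hadj', hnF'⟩ := cutComp_adj hadj
                have hnF : s(a,b) ∉ F := fun h => hnF' (Set.mem_union_left _ h)
                have hbS : b ∉ S := fun hb => hnF' (Set.mem_union_right _
                  ⟨Subgraph.mem_edgeSet.mpr hadj', b, hb, Sym2.mem_mk_right a b⟩)
                have hbC : b ∈ C := by
                  have hra : (SimpleGraph.fromRel
                      (fun a b => H'.Adj a b ∧ s(a,b) ∉ F)).Reachable x₀ a := haC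
                  exact hra.trans (SimpleGraph.Adj.reachable (by
                    rw [SimpleGraph.fromRel_adj]
                    exact ⟨hne, Or.inl ⟨hadj', hnF⟩⟩))
                refine ⟨⟨hbC, hbS⟩, ?_⟩
                rw [SimpleGraph.fromRel_adj]
                exact ⟨hne, Or.inl ⟨⟨hadj', hnF, haC, hbC⟩, haS, hbS⟩⟩
              have hsub2 : cutComp H' (F ∪ N) x ⊆
                  {y : V | (SimpleGraph.fromRel
                    (fun a b => H''.Adj a b ∧ a ∉ S ∧ b ∉ S)).Reachable x y} :=
                fun y hy => (walk_closure hclo x y ⟨hxC, hxS⟩ hy).2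
              have hb1 : ((cutComp H' (F ∪ N) x).ncard : ℝ)
                  ≤ (({y : V | (SimpleGraph.fromRel
                    (fun a b => H''.Adj a b ∧ a ∉ S ∧ b ∉ S)).Reachable x y}).ncard : ℝ) := by
                exact_mod_cast Set.ncard_le_ncard hsub2 (Set.toFinite _)
              have hb2 := hScomp x ⟨hxC, hxS⟩

              refine le_max_of_le_left ?_
              calc ((cutComp H' (F ∪ N) x).ncard : ℝ)
                  ≤ ρ * (C.ncard:ℝ) := hb1.trans hb2
                _ ≤ ρ * (ρ^k * (H'.verts.ncard:ℝ)) := mul_le_mul_of_nonneg_left hCk hρ0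
                _ = ρ^(k+1) * (H'.verts.ncard:ℝ) := by ring
            · -- x ∉ C : old component was already small
              have hmono : cutComp H' (F ∪ N) x ⊆ cutComp H' F x :=
                cutComp_mono Set.subset_union_left
              have hsmall : ((cutComp H' F x).ncard : ℝ) ≤ (H'.verts.ncard:ℝ)/2 := by
                by_contra hbig2
                push_neg at hbig2
                by_cases hdis : ∃ z, z ∈ C ∧ z ∈ cutComp H' F x
                · obtain ⟨z, hz1, hz2⟩ := hdis
                  apply hxC
                  have hz1' : (SimpleGraph.fromRel
                      (fun a b => H'.Adj a b ∧ s(a,b) ∉ F)).Reachable x₀ z := hz1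
                  have hz2' : (SimpleGraph.fromRel
                      (fun a b => H'.Adj a b ∧ s(a,b) ∉ F)).Reachable x z := hz2
                  exact hz1'.trans hz2'.symm
                · push_neg at hdis
                  have hdisj : Disjoint C (cutComp H' F x) :=
                    Set.disjoint_left.mpr (fun z hz1 hz2 => hdis z hz1 hz2)
                  have hun : (C ∪ cutComp H' F x).ncard
                      = C.ncard + (cutComp H' F x).ncard :=
                    Set.ncard_union_eq hdisj (Set.toFinite _) (Set.toFinite _)
                  have hsubv : C ∪ cutComp H' F x ⊆ H'.verts :=
                    Set.union_subset hCsub (cutComp_subset_verts hx)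
                  have hle : (C ∪ cutComp H' F x).ncard ≤ H'.verts.ncard :=
                    Set.ncard_le_ncard hsubv (Set.toFinite _)
                  rw [hun] at hle
                  have hle' : (C.ncard:ℝ) + ((cutComp H' F x).ncard:ℝ)
                      ≤ (H'.verts.ncard:ℝ) := by exact_mod_cast hle
                  linarith
              have h5 : ((cutComp H' (F ∪ N) x).ncard : ℝ)
                  ≤ ((cutComp H' F x).ncard : ℝ) := by
                exact_mod_cast Set.ncard_le_ncard hmono (Set.toFinite _)
              exact le_max_of_le_right (h5.trans hsmall)
  obtain ⟨F, h1, h2, h3⟩ := main K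
  refine ⟨F, h1, ?_, ?_⟩
  · refine h2.trans (le_of_eq (by ring))
  · intro x hx
    have h4 := h3 x hx
    have h5 : ρ^K * (H'.verts.ncard:ℝ) ≤ (H'.verts.ncard:ℝ)/2 := by
      have h6 : ρ^K * (H'.verts.ncard:ℝ) ≤ (1/2) * (H'.verts.ncard:ℝ) :=
        mul_le_mul_of_nonneg_right hK.le (by linarith)
      linarith
    exact h4.trans (max_le h5 le_rfl)
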